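/- For any d, ℓ ∈ ℕ with d ≥ 1, the subsequence (C_{dn+ℓ})_{n≥0} of Catalan numbers is a Hausdorff moment sequence supported in [0, 4^d]; in particular C_{dn} = ∫_0^{4^d} x^n · (x^{(1−d)/d}/(2dπ))·√((4−x^{1/d})/x^{1/d}) dx. -/

import Mathlib

open MeasureTheory Real
open Set intervalIntegral Finset

/-- `y` is a `K`-moment sequence. -/
def IsMomentSeqOn (K : Set ℝ) (y : ℕ → ℝ) : Prop :=
  ∃ μ : Measure ℝ, μ Kᶜ = 0 ∧
    ∀ n : ℕ, Integrable (fun x : ℝ => x ^ n) μ ∧ y n = ∫ x, x ^ n ∂μ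


noncomputable def rho (x : ℝ) : ℝ := 1/(2*π) * Real.sqrt ((4 - x)/x)

lemma rho_meas : Measurable rho := by unfold rho; fun_prop

lemma rho_nonneg (x : ℝ) : 0 ≤ rho x := by unfold rho; positivity

lemma rho_bound {x : ℝ} (hx : x ∈ Set.Ioc (0:ℝ) 4) : rho x ≤ (1/π) * x ^ (-(1/2) : ℝ) := by
  unfold rho
  have h1 : Real.sqrt ((4 - x)/x) ≤ Real.sqrt (4/x) := by
    apply Real.sqrt_le_sqrt
    gcongr
    · exact hx.1.le
    · linarith [hx.1]
  have h2 : Real.sqrt (4/x) = 2 * x ^ (-(1/2) : ℝ) := by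
    rw [show (4:ℝ)/x = 4 * x⁻¹ by ring, Real.sqrt_mul (by norm_num), Real.sqrt_inv,
      show Real.sqrt 4 = 2 by rw [show (4:ℝ) = 2^2 by norm_num, Real.sqrt_sq (by norm_num)],
      Real.sqrt_eq_rpow, ← Real.rpow_neg hx.1.le]
  have hpi : 0 < π := Real.pi_pos
  calc 1/(2*π) * Real.sqrt ((4-x)/x) ≤ 1/(2*π) * (2 * x ^ (-(1/2):ℝ)) := by
        rw [← h2]; gcongr
    _ = (1/π) * x ^ (-(1/2):ℝ) := by field_simp

lemma hInt (m : ℕ) : IntegrableOn (fun x => x^m * rho x) (Set.Ioc (0:ℝ) 4) := by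
  have hg : IntegrableOn (fun x : ℝ => (4:ℝ)^m * ((1/π) * x ^ (-(1/2):ℝ))) (Set.Ioc (0:ℝ) 4) := by
    have := (intervalIntegrable_rpow' (a := 0) (b := 4) (r := -(1/2)) (by norm_num))
    rw [intervalIntegrable_iff_integrableOn_Ioc_of_le (by norm_num)] at this
    exact (this.const_mul _).const_mul _
  refine Integrable.mono' hg ?_ ?_
  · exact ((measurable_id.pow_const m).mul rho_meas).aestronglyMeasurable
  · rw [ae_restrict_iff' measurableSet_Ioc]
    filter_upwards with x hx
    have h1 : 0 ≤ x^m * rho x := mul_nonneg (pow_nonneg hx.1.le m) (rho_nonneg x)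
    rw [Real.norm_eq_abs, abs_of_nonneg h1]
    have h2 : x ^ m ≤ (4:ℝ)^m := pow_le_pow_left₀ hx.1.le hx.2 m
    calc x^m * rho x ≤ (4:ℝ)^m * ((1/π) * x ^ (-(1/2):ℝ)) := by
          apply mul_le_mul h2 (rho_bound hx) (rho_nonneg x) (by positivity)
    _ = _ := rfl


lemma prod_eq_centralBinom (m : ℕ) :
    (4:ℝ)^m * ∏ i ∈ Finset.range m, (2*(i:ℝ)+1)/(2*i+2) = Nat.centralBinom m := by
  induction m with
  | zero => simp [Nat.centralBinom]
  | succ k ih =>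
    have h' : ((k:ℝ)+1) * Nat.centralBinom (k+1) = 2 * (2*k+1) * Nat.centralBinom k := by
      exact_mod_cast Nat.succ_mul_centralBinom_succ k
    have hk1 : ((k:ℝ)+1) ≠ 0 := by positivity
    rw [Finset.prod_range_succ, pow_succ]
    have e : (4:ℝ)^k * 4 * ((∏ i ∈ Finset.range k, (2*(i:ℝ)+1)/(2*i+2)) * ((2*(k:ℝ)+1)/(2*k+2)))
        = ((4:ℝ)^k * ∏ i ∈ Finset.range k, (2*(i:ℝ)+1)/(2*i+2)) * (4 * (2*(k:ℝ)+1)/(2*k+2)) := by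
      ring
    rw [e, ih]
    have hcb : (Nat.centralBinom (k+1) : ℝ) = 2 * (2*k+1) * Nat.centralBinom k / ((k:ℝ)+1) := by
      field_simp
      linarith [h']
    rw [hcb]
    have h22 : (2*(k:ℝ)+2) ≠ 0 := by positivity
    field_simp
    ring

lemma catalan_real (m : ℕ) : (catalan m : ℝ) = Nat.centralBinom m / (m+1) := by
  have h' : ((m:ℝ)+1) * catalan m = Nat.centralBinom m := by
    exact_mod_cast succ_mul_catalan_eq_centralBinom m
  field_simp [← h']
  linarith [h']

lemma sin_even_cos_sq (m : ℕ) :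
    (∫ θ in (0:ℝ)..π, Real.sin θ^(2*m) * Real.cos θ^2) =
      (π * ∏ i ∈ Finset.range m, (2*(i:ℝ)+1)/(2*i+2)) / (2*m+2) := by
  have h1 : ∀ θ : ℝ, Real.sin θ^(2*m) * Real.cos θ^2
      = Real.sin θ^(2*m) - Real.sin θ^(2*(m+1)) := by
    intro θ
    have hc : Real.cos θ^2 = 1 - Real.sin θ^2 := by
      nlinarith [Real.sin_sq_add_cos_sq θ]
    rw [hc]; ring
  simp_rw [h1]
  rw [intervalIntegral.integral_sub (f := fun θ => Real.sin θ^(2*m)) (g := fun θ => Real.sin θ^(2*(m+1))) ((Real.continuous_sin.pow _).intervalIntegrable _ _)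
    ((Real.continuous_sin.pow _).intervalIntegrable _ _),
    integral_sin_pow_even, integral_sin_pow_even, Finset.prod_range_succ]
  have h22 : (2*(m:ℝ)+2) ≠ 0 := by positivity
  field_simp
  ring

lemma rho_contOn : ContinuousOn (fun x : ℝ => rho x) {x : ℝ | x ≠ 0} := by
  unfold rho
  apply ContinuousOn.mul continuousOn_const
  apply Real.continuous_sqrt.comp_continuousOn
  exact ContinuousOn.div ((continuous_const.sub continuous_id).continuousOn)
    continuousOn_id (fun x hx => hx)

lemma base (m : ℕ) : ∫ x in (0:ℝ)..4, x^m * rho x = catalan m := by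
  have hpi : 0 < π := Real.pi_pos
  have hple : (0:ℝ) ≤ π/2 := by positivity
  have hgcont : ContinuousOn (fun u : ℝ => u^m * rho u) {x : ℝ | x ≠ 0} :=
    (continuousOn_id.pow m).mul rho_contOn
  have hFeq : ∀ θ ∈ Ioc (0:ℝ) (π/2), (8 * Real.sin θ * Real.cos θ) *
      ((4 * Real.sin θ^2)^m * rho (4 * Real.sin θ^2)) =
      4^(m+1)/π * (Real.sin θ^(2*m) * Real.cos θ^2) := by
    intro θ hθ
    have hs : 0 < Real.sin θ := Real.sin_pos_of_pos_of_lt_pi hθ.1 (by linarith [hθ.2])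
    have hc : 0 ≤ Real.cos θ := Real.cos_nonneg_of_mem_Icc ⟨by linarith [hθ.1], hθ.2⟩
    have key : (4 - 4*Real.sin θ^2)/(4*Real.sin θ^2) = (Real.cos θ / Real.sin θ)^2 := by
      have h := Real.sin_sq_add_cos_sq θ
      field_simp
      nlinarith [h]
    have hrho : rho (4 * Real.sin θ^2) = 1/(2*π) * (Real.cos θ / Real.sin θ) := by
      simp only [rho]
      rw [key, Real.sqrt_sq (div_nonneg hc hs.le)]
    rw [hrho, mul_pow, ← pow_mul]
    field_simp
    ring
  have himage : ∀ θ ∈ Ioo (0:ℝ) (π/2), (0:ℝ) < 4 * Real.sin θ^2 := by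
    intro θ hθ
    have hs : 0 < Real.sin θ := Real.sin_pos_of_pos_of_lt_pi hθ.1 (by linarith [hθ.2])
    positivity
  have hsub : (∫ θ in (0:ℝ)..(π/2), (fun θ => 8 * Real.sin θ * Real.cos θ) θ •
        ((fun u : ℝ => u^m * rho u) ∘ (fun θ : ℝ => 4 * Real.sin θ^2)) θ)
      = ∫ u in (4 * Real.sin (0:ℝ)^2)..(4 * Real.sin (π/2)^2), u^m * rho u := by
    apply intervalIntegral.integral_comp_smul_deriv'''
    · exact (continuous_const.mul (Real.continuous_sin.pow 2)).continuousOn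
    · intro x hx
      have h1 : HasDerivAt Real.sin (Real.cos x) x := Real.hasDerivAt_sin x
      have h2 : HasDerivAt (fun θ => Real.sin θ^2) (2 * Real.sin x * Real.cos x) x := by
        simpa [mul_comm, mul_assoc] using h1.fun_pow 2
      have h3 : HasDerivAt (fun θ : ℝ => 4 * Real.sin θ^2) (8 * Real.sin x * Real.cos x) x := by
        exact (h2.const_mul 4).congr_deriv (by ring)
      exact h3.hasDerivWithinAt
    · apply hgcont.mono
      rintro u ⟨θ, hθ, rfl⟩
      rw [min_eq_left hple, max_eq_right hple] at hθ
      exact ne_of_gt (himage θ hθ)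
    · have hIcc : IntegrableOn (fun u : ℝ => u^m * rho u) (Set.Icc (0:ℝ) 4) := by
        rw [integrableOn_Icc_iff_integrableOn_Ioc]
        exact hInt m
      apply hIcc.mono_set
      rintro u ⟨θ, hθ, rfl⟩
      have hs : 0 ≤ Real.sin θ ^ 2 := sq_nonneg _
      have hs4 : Real.sin θ ^ 2 ≤ 1 := Real.sin_sq_le_one θ
      refine ⟨by show (0:ℝ) ≤ 4 * Real.sin θ^2; positivity, ?_⟩
      show 4 * Real.sin θ^2 ≤ 4
      nlinarith
    · rw [uIcc_of_le hple, integrableOn_Icc_iff_integrableOn_Ioc]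
      have hGint : IntegrableOn (fun θ => 4^(m+1)/π * (Real.sin θ^(2*m) * Real.cos θ^2))
          (Ioc (0:ℝ) (π/2)) :=
        (continuous_const.mul ((Real.continuous_sin.pow _).mul
          (Real.continuous_cos.pow 2))).integrableOn_Ioc
      apply hGint.congr
      rw [Filter.EventuallyEq, ae_restrict_iff' measurableSet_Ioc]
      filter_upwards with θ hθ
      simpa [Function.comp, smul_eq_mul] using (hFeq θ hθ).symm
  -- rewrite endpoints
  rw [show (4:ℝ) * Real.sin (0:ℝ)^2 = 0 by simp, show (4:ℝ) * Real.sin (π/2)^2 = 4 by simp] at hsub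
  rw [← hsub]
  -- now evaluate the trig integral
  have hcong : (∫ θ in (0:ℝ)..(π/2), (fun θ => 8 * Real.sin θ * Real.cos θ) θ •
        ((fun u : ℝ => u^m * rho u) ∘ (fun θ : ℝ => 4 * Real.sin θ^2)) θ)
      = ∫ θ in (0:ℝ)..(π/2), 4^(m+1)/π * (Real.sin θ^(2*m) * Real.cos θ^2) := by
    apply intervalIntegral.integral_congr_ae
    rw [uIoc_of_le hple]
    filter_upwards with θ hθ
    simpa [Function.comp, smul_eq_mul] using hFeq θ hθ
  rw [hcong]
  -- symmetry: ∫_0^{π/2} = (1/2) ∫_0^π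
  have hIcont : Continuous (fun θ => Real.sin θ^(2*m) * Real.cos θ^2) :=
    (Real.continuous_sin.pow _).mul (Real.continuous_cos.pow 2)
  have hadd : (∫ θ in (0:ℝ)..(π/2), Real.sin θ^(2*m) * Real.cos θ^2)
      + (∫ θ in (π/2:ℝ)..π, Real.sin θ^(2*m) * Real.cos θ^2)
      = ∫ θ in (0:ℝ)..π, Real.sin θ^(2*m) * Real.cos θ^2 :=
    intervalIntegral.integral_add_adjacent_intervals
      (hIcont.intervalIntegrable _ _) (hIcont.intervalIntegrable _ _)
  have hrefl : (∫ θ in (π/2:ℝ)..π, Real.sin θ^(2*m) * Real.cos θ^2)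
      = ∫ θ in (0:ℝ)..(π/2), Real.sin θ^(2*m) * Real.cos θ^2 := by
    have h := intervalIntegral.integral_comp_sub_left (a := 0) (b := π/2)
      (fun θ => Real.sin θ^(2*m) * Real.cos θ^2) π
    rw [show π - π/2 = π/2 by ring, sub_zero] at h
    rw [← h]
    apply intervalIntegral.integral_congr
    intro θ _
    simp [Real.sin_pi_sub, Real.cos_pi_sub]
  have hhalf : (∫ θ in (0:ℝ)..(π/2), Real.sin θ^(2*m) * Real.cos θ^2)
      = (π * ∏ i ∈ Finset.range m, (2*(i:ℝ)+1)/(2*i+2)) / (2*m+2) / 2 := by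
    rw [hrefl] at hadd
    rw [sin_even_cos_sq] at hadd
    linarith [hadd]
  rw [intervalIntegral.integral_const_mul, hhalf, catalan_real m, ← prod_eq_centralBinom m]
  have h22 : (2*(m:ℝ)+2) ≠ 0 := by positivity
  have hm1 : ((m:ℝ)+1) ≠ 0 := by positivity
  field_simp
  ring


theorem catalan_subsequence_integral_repr (d ℓ : ℕ) (hd : 1 ≤ d) :
    IsMomentSeqOn (Set.Icc 0 ((4:ℝ) ^ d)) (fun n => (catalan (d * n + ℓ) : ℝ)) ∧
    ∀ n : ℕ, (catalan (d * n) : ℝ) =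
      ∫ x in (0:ℝ)..((4:ℝ) ^ d), x ^ n *
        (x ^ ((1 - (d:ℝ)) / d) / (2 * d * π) *
          Real.sqrt ((4 - x ^ ((1:ℝ) / d)) / x ^ ((1:ℝ) / d))) := by
  have hd0 : (d:ℝ) ≠ 0 := Nat.cast_ne_zero.2 (by omega)
  have hφ : Measurable (fun x : ℝ => x ^ d) := measurable_id.pow_const d
  constructor
  · -- moment sequence
    unfold IsMomentSeqOn
    set w : ℝ → NNReal := fun x => Real.toNNReal (x^ℓ * rho x) with hw
    have hwmeas : Measurable w := ((measurable_id.pow_const ℓ).mul rho_meas).real_toNNReal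
    refine ⟨(((volume.restrict (Set.Ioc (0:ℝ) 4)).withDensity (fun x => (w x : ENNReal))).map
      (fun x : ℝ => x ^ d)), ?_, ?_⟩
    · rw [Measure.map_apply hφ measurableSet_Icc.compl,
        withDensity_apply _ (hφ measurableSet_Icc.compl),
        Measure.restrict_restrict (hφ measurableSet_Icc.compl)]
      have hset : (fun x : ℝ => x ^ d) ⁻¹' (Set.Icc 0 ((4:ℝ)^d))ᶜ ∩ Set.Ioc (0:ℝ) 4 = ∅ := by
        ext x
        simp only [Set.mem_inter_iff, Set.mem_preimage, Set.mem_compl_iff,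
          Set.mem_empty_iff_false, iff_false, not_and]
        intro hmem hx
        exact absurd (Set.mem_Icc.mpr ⟨pow_nonneg hx.1.le d, pow_le_pow_left₀ hx.1.le hx.2 d⟩) hmem
      rw [hset]
      simp
    · intro n
      have heq : ∀ x ∈ Set.Ioc (0:ℝ) 4, (w x : ℝ) * (x^d)^n = x^(d*n+ℓ) * rho x := by
        intro x hx
        have h1 : (w x : ℝ) = x^ℓ * rho x :=
          Real.coe_toNNReal _ (mul_nonneg (pow_nonneg hx.1.le ℓ) (rho_nonneg x))
        rw [h1, ← pow_mul, pow_add]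
        ring
      have haeeq : (fun x => (w x : ℝ) * (x^d)^n)
          =ᵐ[volume.restrict (Set.Ioc (0:ℝ) 4)] (fun x => x^(d*n+ℓ) * rho x) := by
        rw [Filter.EventuallyEq, ae_restrict_iff' measurableSet_Ioc]
        filter_upwards with x hx
        exact heq x hx
      constructor
      · rw [integrable_map_measure (continuous_pow n).aestronglyMeasurable hφ.aemeasurable,
          integrable_withDensity_iff_integrable_coe_smul hwmeas]
        apply ((hInt (d*n+ℓ)).congr haeeq.symm).congr
        filter_upwards with x
        simp [Function.comp, smul_eq_mul]
      · rw [integral_map hφ.aemeasurable (continuous_pow n).aestronglyMeasurable,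
          integral_withDensity_eq_integral_smul hwmeas]
        have : (∫ x, w x • ((x^d)^n) ∂(volume.restrict (Set.Ioc (0:ℝ) 4)))
            = ∫ x in Set.Ioc (0:ℝ) 4, x^(d*n+ℓ) * rho x := by
          apply MeasureTheory.integral_congr_ae
          filter_upwards [haeeq] with x hx
          simpa [NNReal.smul_def, smul_eq_mul] using hx
        rw [this, ← intervalIntegral.integral_of_le (by norm_num : (0:ℝ) ≤ 4), base]
  · -- integral formula
    intro n
    have hπ : (0:ℝ) < π := Real.pi_pos
    have hdpos : (0:ℝ) < d := by exact_mod_cast Nat.pos_of_ne_zero (by omega)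
    have hrpowCont : ∀ c : ℝ, ContinuousOn (fun u : ℝ => u ^ c) {u : ℝ | 0 < u} :=
      fun c u hu => (Real.continuousAt_rpow_const u c (Or.inl (ne_of_gt hu))).continuousWithinAt
    -- the key pointwise identity
    have hkey : ∀ x ∈ Set.Ioc (0:ℝ) 4, ((d:ℝ) * x^(d-1)) • ((x^d)^n *
        ((x^d) ^ ((1 - (d:ℝ))/d) / (2*d*π) *
          Real.sqrt ((4 - (x^d)^((1:ℝ)/d))/(x^d)^((1:ℝ)/d))))
        = x^(d*n) * rho x := by
      intro x hx
      have hx0 : (0:ℝ) < x := hx.1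
      have h1 : ((x:ℝ)^d : ℝ) ^ ((1 - (d:ℝ))/d) = x ^ ((1:ℝ) - d) := by
        rw [← Real.rpow_natCast x d, ← Real.rpow_mul hx0.le]
        congr 1
        field_simp
      have h2 : ((x:ℝ)^d : ℝ) ^ ((1:ℝ)/d) = x := by
        rw [← Real.rpow_natCast x d, ← Real.rpow_mul hx0.le, mul_one_div, div_self hd0,
          Real.rpow_one]
      have h3 : x ^ ((1:ℝ) - d) * x^(d-1) = 1 := by
        rw [← Real.rpow_natCast x (d-1), ← Real.rpow_add hx0,
          show (1:ℝ) - d + ((d-1:ℕ):ℝ) = 0 by rw [Nat.cast_sub hd]; push_cast; ring]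
        exact Real.rpow_zero x
      rw [h1, h2, smul_eq_mul, ← pow_mul, rho]
      have h4 : (d:ℝ) / (2*(d:ℝ)*π) = 1/(2*π) := by
        rw [div_eq_div_iff (by positivity) (by positivity)]
        ring
      calc (d:ℝ) * x^(d-1) * (x^(d*n) * (x^((1:ℝ)-(d:ℝ))/(2*(d:ℝ)*π) * Real.sqrt ((4-x)/x)))
          = (x^((1:ℝ)-(d:ℝ)) * x^(d-1)) * ((d:ℝ)/(2*(d:ℝ)*π)) *
            (x^(d*n) * Real.sqrt ((4-x)/x)) := by ring
        _ = x^(d*n) * (1/(2*π) * Real.sqrt ((4-x)/x)) := by rw [h3, h4]; ring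
    -- the substitution
    have hsub2 : (∫ x in (0:ℝ)..4, (fun x : ℝ => (d:ℝ) * x^(d-1)) x •
          ((fun u : ℝ => u^n * (u ^ ((1 - (d:ℝ))/d) / (2*d*π) *
            Real.sqrt ((4 - u^((1:ℝ)/d))/u^((1:ℝ)/d)))) ∘ (fun x : ℝ => x^d)) x)
        = ∫ u in ((0:ℝ)^d)..((4:ℝ)^d), u^n * (u ^ ((1 - (d:ℝ))/d) / (2*d*π) *
            Real.sqrt ((4 - u^((1:ℝ)/d))/u^((1:ℝ)/d))) := by
      apply intervalIntegral.integral_comp_smul_deriv'''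
      · exact (continuous_pow d).continuousOn
      · intro x hx
        exact (hasDerivAt_pow d x).hasDerivWithinAt
      · -- continuity on the image of Ioo
        have hcont2 : ContinuousOn (fun u : ℝ => u^n * (u ^ ((1 - (d:ℝ))/d) / (2*d*π) *
            Real.sqrt ((4 - u^((1:ℝ)/d))/u^((1:ℝ)/d)))) {u : ℝ | 0 < u} := by
          apply (continuousOn_id.pow n).mul
          apply ContinuousOn.mul
          · exact (hrpowCont _).div_const _
          · apply Real.continuous_sqrt.comp_continuousOn
            exact ContinuousOn.div (continuousOn_const.sub (hrpowCont _)) (hrpowCont _)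
              (fun u hu => ne_of_gt (Real.rpow_pos_of_pos hu _))
        apply hcont2.mono
        rintro u ⟨x, hx, rfl⟩
        rw [min_eq_left (by norm_num : (0:ℝ) ≤ 4), max_eq_right (by norm_num : (0:ℝ) ≤ 4)] at hx
        exact pow_pos hx.1 d
      · -- integrability on the image of [[0,4]]
        have hIm : (fun x : ℝ => x^d) '' (Set.uIcc (0:ℝ) 4) ⊆ Set.Icc (0:ℝ) ((4:ℝ)^d) := by
          rintro u ⟨x, hx, rfl⟩
          rw [Set.uIcc_of_le (by norm_num : (0:ℝ) ≤ 4)] at hx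
          exact ⟨pow_nonneg hx.1 d, pow_le_pow_left₀ hx.1 hx.2 d⟩
        apply IntegrableOn.mono_set ?_ hIm
        rw [integrableOn_Icc_iff_integrableOn_Ioc]
        set e : ℝ := -1 + 1/(2*(d:ℝ)) with he_def
        have he : (-1:ℝ) < e := by
          rw [he_def]
          have : (0:ℝ) < 1/(2*(d:ℝ)) := by positivity
          linarith
        have hmaj : IntegrableOn (fun u : ℝ => ((4:ℝ)^d)^n * ((1/((d:ℝ)*π)) * u ^ e))
            (Set.Ioc (0:ℝ) ((4:ℝ)^d)) := by
          have h4d : (0:ℝ) ≤ (4:ℝ)^d := by positivity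
          have := (intervalIntegrable_rpow' (a := 0) (b := (4:ℝ)^d) (r := e) he)
          rw [intervalIntegrable_iff_integrableOn_Ioc_of_le h4d] at this
          exact (this.const_mul _).const_mul _
        refine Integrable.mono' hmaj ?_ ?_
        · apply Measurable.aestronglyMeasurable
          fun_prop
        · rw [ae_restrict_iff' measurableSet_Ioc]
          filter_upwards with u hu
          have hu0 : (0:ℝ) < u := hu.1
          have ht0 : (0:ℝ) < u ^ ((1:ℝ)/d) := Real.rpow_pos_of_pos hu0 _
          have hb1 : Real.sqrt ((4 - u^((1:ℝ)/d))/u^((1:ℝ)/d)) ≤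
              2 * u ^ (-(1/(2*(d:ℝ)))) := by
            calc Real.sqrt ((4 - u^((1:ℝ)/d))/u^((1:ℝ)/d))
                ≤ Real.sqrt (4/u^((1:ℝ)/d)) := by
                  apply Real.sqrt_le_sqrt
                  gcongr
                  linarith [ht0]
              _ = 2 * (u^((1:ℝ)/d)) ^ (-(1/2):ℝ) := by
                  rw [show (4:ℝ)/u^((1:ℝ)/d) = 4 * (u^((1:ℝ)/d))⁻¹ by ring,
                    Real.sqrt_mul (by norm_num), Real.sqrt_inv,
                    show Real.sqrt 4 = 2 by
                      rw [show (4:ℝ) = 2^2 by norm_num, Real.sqrt_sq (by norm_num)],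
                    Real.sqrt_eq_rpow, ← Real.rpow_neg ht0.le]
              _ = 2 * u ^ (-(1/(2*(d:ℝ)))) := by
                  rw [← Real.rpow_mul hu0.le]
                  congr 1
                  ring_nf
          have hcomb : u ^ ((1 - (d:ℝ))/d) * u ^ (-(1/(2*(d:ℝ)))) = u ^ e := by
            rw [← Real.rpow_add hu0]
            congr 1
            rw [he_def]
            field_simp
            ring
          rw [Real.norm_eq_abs, abs_of_nonneg (by positivity)]
          have hun : u^n ≤ ((4:ℝ)^d)^n := pow_le_pow_left₀ hu0.le hu.2 n
          have hgnn : 0 ≤ u ^ ((1 - (d:ℝ))/d) / (2*(d:ℝ)*π) *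
              Real.sqrt ((4 - u^((1:ℝ)/d))/u^((1:ℝ)/d)) := by positivity
          have hg2b : u ^ ((1 - (d:ℝ))/d) / (2*(d:ℝ)*π) *
              Real.sqrt ((4 - u^((1:ℝ)/d))/u^((1:ℝ)/d)) ≤ (1/((d:ℝ)*π)) * u ^ e := by
            calc u ^ ((1 - (d:ℝ))/d) / (2*(d:ℝ)*π) *
                Real.sqrt ((4 - u^((1:ℝ)/d))/u^((1:ℝ)/d))
                ≤ u ^ ((1 - (d:ℝ))/d) / (2*(d:ℝ)*π) * (2 * u ^ (-(1/(2*(d:ℝ))))) := by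
                  apply mul_le_mul_of_nonneg_left hb1 (by positivity)
              _ = (u ^ ((1 - (d:ℝ))/d) * u ^ (-(1/(2*(d:ℝ))))) * (2/(2*(d:ℝ)*π)) := by
                  ring
              _ = (1/((d:ℝ)*π)) * u ^ e := by
                  rw [hcomb, show (2:ℝ)/(2*(d:ℝ)*π) = 1/((d:ℝ)*π) by rw [div_eq_div_iff (by positivity) (by positivity)]; ring]
                  ring
          calc u^n * (u ^ ((1 - (d:ℝ))/d) / (2*(d:ℝ)*π) *
              Real.sqrt ((4 - u^((1:ℝ)/d))/u^((1:ℝ)/d)))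
              ≤ ((4:ℝ)^d)^n * ((1/((d:ℝ)*π)) * u ^ e) := by
                apply mul_le_mul hun hg2b hgnn (by positivity)
            _ = _ := rfl
      · -- integrability of the substituted integrand
        rw [Set.uIcc_of_le (by norm_num : (0:ℝ) ≤ 4), integrableOn_Icc_iff_integrableOn_Ioc]
        apply ((hInt (d*n)).congr)
        rw [Filter.EventuallyEq, ae_restrict_iff' measurableSet_Ioc]
        filter_upwards with x hx
        simpa [Function.comp, smul_eq_mul] using (hkey x hx).symm
    have hcong2 : (∫ x in (0:ℝ)..4, (fun x : ℝ => (d:ℝ) * x^(d-1)) x •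
          ((fun u : ℝ => u^n * (u ^ ((1 - (d:ℝ))/d) / (2*d*π) *
            Real.sqrt ((4 - u^((1:ℝ)/d))/u^((1:ℝ)/d)))) ∘ (fun x : ℝ => x^d)) x)
        = ∫ x in (0:ℝ)..4, x^(d*n) * rho x := by
      apply intervalIntegral.integral_congr_ae
      rw [Set.uIoc_of_le (by norm_num : (0:ℝ) ≤ 4)]
      filter_upwards with x hx
      simpa [Function.comp, smul_eq_mul] using hkey x hx
    rw [show ((0:ℝ)^d) = 0 from zero_pow (by omega)] at hsub2
    rw [← hsub2, hcong2, base]
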